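/- Let C be a category with binary coproducts, f : A → B any morphism, and ι : B → X a coproduct inclusion. If ι ∘ f is extensive and ι satisfies (E2), then f is extensive. -/

import Mathlib

open CategoryTheory CategoryTheory.Limits

universe v u

variable {C : Type u} [Category.{v} C]

/-- `i₁ : X₁ ⟶ X` and `i₂ : X₂ ⟶ X` form a binary coproduct diagram. -/
def IsCoprodDiagram {X₁ X₂ X : C} (i₁ : X₁ ⟶ X) (i₂ : X₂ ⟶ X) : Prop :=
  Nonempty (IsColimit (BinaryCofan.mk i₁ i₂))

/-- `p₁ : X ⟶ X₁` and `p₂ : X ⟶ X₂` form a binary product diagram. -/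
def IsProdDiagram {X X₁ X₂ : C} (p₁ : X ⟶ X₁) (p₂ : X ⟶ X₂) : Prop :=
  Nonempty (IsLimit (BinaryFan.mk p₁ p₂))

/-- Condition (E1): pullbacks of `f` along both inclusions of any binary coproduct diagram
exist and the resulting legs form a binary coproduct diagram. -/
def SatE1 {A X : C} (f : A ⟶ X) : Prop :=
  ∀ {X₁ X₂ : C} (x₁ : X₁ ⟶ X) (x₂ : X₂ ⟶ X), IsCoprodDiagram x₁ x₂ →
    ∃ (A₁ A₂ : C) (a₁ : A₁ ⟶ A) (a₂ : A₂ ⟶ A) (f₁ : A₁ ⟶ X₁) (f₂ : A₂ ⟶ X₂),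
      IsPullback a₁ f₁ f x₁ ∧ IsPullback a₂ f₂ f x₂ ∧ IsCoprodDiagram a₁ a₂

/-- Condition (E2): in any commutative diagram over `f` whose rows are binary coproduct
diagrams, both squares are pullbacks. -/
def SatE2 {A X : C} (f : A ⟶ X) : Prop :=
  ∀ {A₁ A₂ X₁ X₂ : C} (a₁ : A₁ ⟶ A) (a₂ : A₂ ⟶ A) (x₁ : X₁ ⟶ X) (x₂ : X₂ ⟶ X)
    (f₁ : A₁ ⟶ X₁) (f₂ : A₂ ⟶ X₂),
    a₁ ≫ f = f₁ ≫ x₁ → a₂ ≫ f = f₂ ≫ x₂ →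
    IsCoprodDiagram x₁ x₂ → IsCoprodDiagram a₁ a₂ →
    IsPullback a₁ f₁ f x₁ ∧ IsPullback a₂ f₂ f x₂

/-- A morphism is extensive if it satisfies (E1) and (E2). -/
def Extensive {A X : C} (f : A ⟶ X) : Prop := SatE1 f ∧ SatE2 f

/-- Condition (C1): pushouts of `f` along both projections of any binary product diagram
exist and the resulting legs form a binary product diagram. -/
def SatC1 {A X : C} (f : A ⟶ X) : Prop :=
  ∀ {A₁ A₂ : C} (p₁ : A ⟶ A₁) (p₂ : A ⟶ A₂), IsProdDiagram p₁ p₂ →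
    ∃ (X₁ X₂ : C) (q₁ : X ⟶ X₁) (q₂ : X ⟶ X₂) (f₁ : A₁ ⟶ X₁) (f₂ : A₂ ⟶ X₂),
      IsPushout p₁ f f₁ q₁ ∧ IsPushout p₂ f f₂ q₂ ∧ IsProdDiagram q₁ q₂

/-- Condition (C2): in any commutative diagram over `f` whose rows are binary product
diagrams, both squares are pushouts. -/
def SatC2 {A X : C} (f : A ⟶ X) : Prop :=
  ∀ {A₁ A₂ X₁ X₂ : C} (p₁ : A ⟶ A₁) (p₂ : A ⟶ A₂) (q₁ : X ⟶ X₁) (q₂ : X ⟶ X₂)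
    (f₁ : A₁ ⟶ X₁) (f₂ : A₂ ⟶ X₂),
    p₁ ≫ f₁ = f ≫ q₁ → p₂ ≫ f₂ = f ≫ q₂ →
    IsProdDiagram p₁ p₂ → IsProdDiagram q₁ q₂ →
    IsPushout p₁ f f₁ q₁ ∧ IsPushout p₂ f f₂ q₂

/-- A morphism is coextensive if it satisfies (C1) and (C2). -/
def Coextensive {A X : C} (f : A ⟶ X) : Prop := SatC1 f ∧ SatC2 f

/-- A coproduct inclusion: a morphism admitting a complementary inclusion forming
a binary coproduct diagram. -/
def IsCoprodInclusion {A X : C} (ι : A ⟶ X) : Prop :=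
  ∃ (A' : C) (ι' : A' ⟶ X), IsCoprodDiagram ι ι'

/-- An extremal epimorphism: whenever `e = i ≫ m` with `m` a monomorphism, `m` is an
isomorphism. -/
def IsExtremalEpi {A B : C} (e : A ⟶ B) : Prop :=
  ∀ {I : C} (i : A ⟶ I) (m : I ⟶ B), Mono m → i ≫ m = e → IsIso m

/-- The binary strict refinement property for an object `X`. -/
def BinaryStrictRefinement (X : C) : Prop :=
  ∀ {A₁ A₂ B₁ B₂ : C} (a₁ : X ⟶ A₁) (a₂ : X ⟶ A₂) (b₁ : X ⟶ B₁) (b₂ : X ⟶ B₂),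
    IsProdDiagram a₁ a₂ → IsProdDiagram b₁ b₂ →
    ∃ (C₁₁ C₁₂ C₂₁ C₂₂ : C)
      (α₁₁ : A₁ ⟶ C₁₁) (α₁₂ : A₁ ⟶ C₁₂) (α₂₁ : A₂ ⟶ C₂₁) (α₂₂ : A₂ ⟶ C₂₂)
      (β₁₁ : B₁ ⟶ C₁₁) (β₁₂ : B₂ ⟶ C₁₂) (β₂₁ : B₁ ⟶ C₂₁) (β₂₂ : B₂ ⟶ C₂₂),
      a₁ ≫ α₁₁ = b₁ ≫ β₁₁ ∧ a₁ ≫ α₁₂ = b₂ ≫ β₁₂ ∧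
      a₂ ≫ α₂₁ = b₁ ≫ β₂₁ ∧ a₂ ≫ α₂₂ = b₂ ≫ β₂₂ ∧
      IsProdDiagram α₁₁ α₁₂ ∧ IsProdDiagram α₂₁ α₂₂ ∧
      IsProdDiagram β₁₁ β₂₁ ∧ IsProdDiagram β₁₂ β₂₂

/-- A jointly monomorphic pair which is a reflexive, symmetric and transitive relation. -/
def IsEquivalenceRelationPair {R X : C} (r₁ r₂ : R ⟶ X) : Prop :=
  (∀ {T : C} (a b : T ⟶ R), a ≫ r₁ = b ≫ r₁ → a ≫ r₂ = b ≫ r₂ → a = b) ∧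
  (∃ d : X ⟶ R, d ≫ r₁ = 𝟙 X ∧ d ≫ r₂ = 𝟙 X) ∧
  (∃ s : R ⟶ R, s ≫ r₁ = r₂ ∧ s ≫ r₂ = r₁) ∧
  (∀ {P : C} (p₁ p₂ : P ⟶ R), IsPullback p₁ p₂ r₂ r₁ →
    ∃ t : P ⟶ R, t ≫ r₁ = p₁ ≫ r₁ ∧ t ≫ r₂ = p₂ ≫ r₂)

/-- Associativity of binary coproducts: if `B = B₁ ⨿ B₂` and `X = B ⨿ B'`, then
`X = B₁ ⨿ (B₂ ⨿ B')`. -/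
noncomputable def coprodAssocAux [HasBinaryCoproducts C] {B₁ B₂ B B' X : C} {b₁ : B₁ ⟶ B}
    {b₂ : B₂ ⟶ B} {ι : B ⟶ X} {ι' : B' ⟶ X}
    (hB : IsColimit (BinaryCofan.mk b₁ b₂)) (hX : IsColimit (BinaryCofan.mk ι ι')) :
    IsColimit (BinaryCofan.mk (b₁ ≫ ι) (coprod.desc (b₂ ≫ ι) ι')) := by
  have facB : ∀ {T : C} (s₁ : B₁ ⟶ T) (s₂ : B₂ ⟶ T),
      b₁ ≫ hB.desc (BinaryCofan.mk s₁ s₂) = s₁ ∧ b₂ ≫ hB.desc (BinaryCofan.mk s₁ s₂) = s₂ :=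
    fun s₁ s₂ => ⟨hB.fac _ ⟨WalkingPair.left⟩, hB.fac _ ⟨WalkingPair.right⟩⟩
  have facX : ∀ {T : C} (s₁ : B ⟶ T) (s₂ : B' ⟶ T),
      ι ≫ hX.desc (BinaryCofan.mk s₁ s₂) = s₁ ∧ ι' ≫ hX.desc (BinaryCofan.mk s₁ s₂) = s₂ :=
    fun s₁ s₂ => ⟨hX.fac _ ⟨WalkingPair.left⟩, hX.fac _ ⟨WalkingPair.right⟩⟩
  refine BinaryCofan.IsColimit.mk _
    (fun {T} s₁ s₂ => hX.desc (BinaryCofan.mk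
      (hB.desc (BinaryCofan.mk s₁ (coprod.inl ≫ s₂))) (coprod.inr ≫ s₂))) ?_ ?_ ?_
  · intro T s₁ s₂
    show (b₁ ≫ ι) ≫ _ = s₁
    erw [Category.assoc, (facX _ _).1, (facB _ _).1]
  · intro T s₁ s₂
    show coprod.desc (b₂ ≫ ι) ι' ≫ _ = s₂
    apply coprod.hom_ext
    · erw [coprod.inl_desc_assoc, Category.assoc, (facX _ _).1, (facB _ _).2]
    · erw [coprod.inr_desc_assoc, (facX _ _).2]; rfl
  · intro T s₁ s₂ m hm₁ hm₂
    replace hm₁ : (b₁ ≫ ι) ≫ m = s₁ := hm₁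
    replace hm₂ : coprod.desc (b₂ ≫ ι) ι' ≫ m = s₂ := hm₂
    apply BinaryCofan.IsColimit.hom_ext hX
    · show ι ≫ m = ι ≫ _
      erw [(facX _ _).1]
      apply BinaryCofan.IsColimit.hom_ext hB
      · show b₁ ≫ ι ≫ m = b₁ ≫ _
        erw [(facB _ _).1, ← Category.assoc, hm₁]
      · show b₂ ≫ ι ≫ m = b₂ ≫ _
        erw [(facB _ _).2, ← hm₂, coprod.inl_desc_assoc, Category.assoc]
    · show ι' ≫ m = ι' ≫ _
      erw [(facX _ _).2, ← hm₂, coprod.inr_desc_assoc]; rfl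

/-- If `ι ≫ f` is extensive where `ι` is a coproduct inclusion satisfying (E2), then `f` is
extensive. -/
theorem extensive_of_inclusion_comp [HasBinaryCoproducts C] {A B X : C}
    (f : A ⟶ B) (ι : B ⟶ X) (hinc : IsCoprodInclusion ι)
    (hcomp : Extensive (f ≫ ι)) (hE2 : SatE2 ι) : Extensive f := by
  obtain ⟨B', ι', ⟨hX⟩⟩ := hinc
  constructor
  · -- (E1)
    intro B₁ B₂ b₁ b₂ ⟨hB⟩
    -- the associated coproduct diagram over X
    set x₂ : B₂ ⨿ B' ⟶ X := coprod.desc (b₂ ≫ ι) ι' with hx₂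
    have hXassoc : IsCoprodDiagram (b₁ ≫ ι) x₂ := ⟨coprodAssocAux hB hX⟩
    -- squares for ι from (E2)
    obtain ⟨tpb₁, tpb₂⟩ := hE2 b₁ b₂ (b₁ ≫ ι) x₂ (𝟙 B₁) coprod.inl (by simp)
      (by rw [hx₂]; exact (coprod.inl_desc _ _).symm) hXassoc ⟨hB⟩
    -- apply (E1) of f ≫ ι
    obtain ⟨A₁, A₂, a₁, a₂, g₁, g₂, pb₁, pb₂, hA⟩ := hcomp.1 (b₁ ≫ ι) x₂ hXassoc
    -- first square
    have hw₁ : (a₁ ≫ f) ≫ ι = g₁ ≫ b₁ ≫ ι := by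
      rw [Category.assoc]; exact pb₁.w
    have e₁ : a₁ ≫ f = g₁ ≫ b₁ := by
      have l1 := tpb₁.lift_fst (a₁ ≫ f) g₁ hw₁
      have l2 := tpb₁.lift_snd (a₁ ≫ f) g₁ hw₁
      rw [Category.comp_id] at l2
      rw [← l1, l2]
    have sq₁ : IsPullback a₁ g₁ f b₁ := by
      refine IsPullback.of_bot ?_ e₁ tpb₁
      simpa using pb₁
    -- second square
    have hw₂ : (a₂ ≫ f) ≫ ι = g₂ ≫ x₂ := by
      rw [Category.assoc]; exact pb₂.w
    set w₂ : A₂ ⟶ B₂ := tpb₂.lift (a₂ ≫ f) g₂ hw₂ with hw₂def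
    have l1 := tpb₂.lift_fst (a₂ ≫ f) g₂ hw₂
    have l2 := tpb₂.lift_snd (a₂ ≫ f) g₂ hw₂
    have sq₂ : IsPullback a₂ w₂ f b₂ := by
      refine IsPullback.of_bot ?_ l1.symm tpb₂
      rw [← hw₂def] at l2
      rw [l2]
      exact pb₂
    exact ⟨A₁, A₂, a₁, a₂, g₁, w₂, sq₁, sq₂, hA⟩
  · -- (E2)
    intro A₁ A₂ B₁ B₂ a₁ a₂ b₁ b₂ f₁ f₂ c₁ c₂ ⟨hB⟩ ⟨hA⟩
    set x₂ : B₂ ⨿ B' ⟶ X := coprod.desc (b₂ ≫ ι) ι' with hx₂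
    have hXassoc : IsCoprodDiagram (b₁ ≫ ι) x₂ := ⟨coprodAssocAux hB hX⟩
    obtain ⟨tpb₁, tpb₂⟩ := hE2 b₁ b₂ (b₁ ≫ ι) x₂ (𝟙 B₁) coprod.inl (by simp)
      (by rw [hx₂]; exact (coprod.inl_desc _ _).symm) hXassoc ⟨hB⟩
    obtain ⟨P₁, P₂⟩ := hcomp.2 a₁ a₂ (b₁ ≫ ι) x₂ f₁ (f₂ ≫ coprod.inl)
      (by rw [← Category.assoc, c₁, Category.assoc])
      (by simp only [Category.assoc, hx₂, coprod.inl_desc]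
          rw [← Category.assoc, c₂, Category.assoc])
      hXassoc ⟨hA⟩
    constructor
    · refine IsPullback.of_bot ?_ c₁ tpb₁
      simpa using P₁
    · exact IsPullback.of_bot P₂ c₂ tpb₂
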